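/- Let (S, f) be a Frobenius GNS in ℕ_0^d. Then S is almost symmetric if and only if for every gap h ∈ H(S) ∖ (PF(S) ∖ {f}) one has f − h ∈ S. -/

import Mathlib

open scoped BigOperators

/-- A generalized numerical semigroup: a submonoid of `ℕ^d` with finite complement. -/
def IsGNS {d : ℕ} (S : Set (Fin d → ℕ)) : Prop :=
  (0 : Fin d → ℕ) ∈ S ∧ (∀ x y : Fin d → ℕ, x ∈ S → y ∈ S → x + y ∈ S) ∧ Sᶜ.Finite

/-- The genus: number of gaps. -/
noncomputable def genus {d : ℕ} (S : Set (Fin d → ℕ)) : ℕ := Sᶜ.ncard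

/-- Pseudo-Frobenius elements. -/
def PF {d : ℕ} (S : Set (Fin d → ℕ)) : Set (Fin d → ℕ) :=
  {h | h ∉ S ∧ ∀ s ∈ S, s ≠ 0 → h + s ∈ S}

/-- The type: number of pseudo-Frobenius elements. -/
noncomputable def typ {d : ℕ} (S : Set (Fin d → ℕ)) : ℕ := (PF S).ncard

/-- Maximal elements of a set with respect to a relation. -/
def Maximals {α : Type*} (le : α → α → Prop) (X : Set α) : Set α :=
  {x ∈ X | ∀ y ∈ X, le x y → x = y}

/-- `f` is the unique maximal element of the set of gaps w.r.t. the componentwise order. -/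
def IsFrobenius {d : ℕ} (S : Set (Fin d → ℕ)) (f : Fin d → ℕ) : Prop :=
  Maximals (· ≤ ·) Sᶜ = {f}

/-- Almost symmetric: `2 g(S) + 1 - t(S) = ∏ (h i + 1)` for some gap `h`. -/
def AlmostSymmetric {d : ℕ} (S : Set (Fin d → ℕ)) : Prop :=
  ∃ h ∉ S, 2 * genus S + 1 = typ S + ∏ i, (h i + 1)

/-- Special gaps. -/
def SG {d : ℕ} (S : Set (Fin d → ℕ)) : Set (Fin d → ℕ) :=
  {h ∈ PF S | h + h ∈ S}

/-- The partial order `≤_S` : `y ≤_S x` iff `x - y ∈ S`. -/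
def leS {d : ℕ} (S : Set (Fin d → ℕ)) (x y : Fin d → ℕ) : Prop :=
  ∃ s ∈ S, x + s = y

/-- The Apéry set of `S` with respect to `n`. -/
def Ap {d : ℕ} (S : Set (Fin d → ℕ)) (n : Fin d → ℕ) : Set (Fin d → ℕ) :=
  {s ∈ S | ¬ ∃ u ∈ S, u + n = s}

/-- The reduced Apéry set of `S` with respect to `n`. -/
def Cred {d : ℕ} (S : Set (Fin d → ℕ)) (n : Fin d → ℕ) : Set (Fin d → ℕ) :=
  {s ∈ Ap S n | ∃ h, h ∉ S ∧ s ≤ h + n}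

/-- A monomial order on `ℕ^d` given by its strict-order relation. -/
def IsMonomialOrder (d : ℕ) (lt : (Fin d → ℕ) → (Fin d → ℕ) → Prop) : Prop :=
  (∀ a, ¬ lt a a) ∧ (∀ a b c, lt a b → lt b c → lt a c) ∧
  (∀ a b, a ≠ b → lt a b ∨ lt b a) ∧
  (∀ u a b, lt a b → lt (a + u) (b + u)) ∧
  (∀ a, a ≠ (0 : Fin d → ℕ) → lt 0 a)

/-- Minimal generator of a GNS. -/
def IsMinGen {d : ℕ} (S : Set (Fin d → ℕ)) (x : Fin d → ℕ) : Prop :=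
  x ∈ S ∧ x ≠ 0 ∧ ∀ y ∈ S, ∀ z ∈ S, y ≠ 0 → z ≠ 0 → y + z ≠ x

/-- Irreducible GNS: not an intersection of two GNSs properly containing it. -/
def GNSIrreducible {d : ℕ} (S : Set (Fin d → ℕ)) : Prop :=
  ¬ ∃ S₁ S₂ : Set (Fin d → ℕ), IsGNS S₁ ∧ IsGNS S₂ ∧ S ⊂ S₁ ∧ S ⊂ S₂ ∧ S = S₁ ∩ S₂

/-- Pseudo-symmetric: `PF S = {f, f/2}`. -/
def PseudoSymmetric {d : ℕ} (S : Set (Fin d → ℕ)) : Prop :=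
  ∃ f q : Fin d → ℕ, f ≠ q ∧ q + q = f ∧ PF S = {f, q}

/-- A Frobenius GNS `(S, f)` is almost symmetric iff for every gap
`h ∈ H(S) ∖ (PF(S) ∖ {f})` one has `f - h ∈ S`. -/
theorem statement2 (d : ℕ) (hd : 0 < d) (S : Set (Fin d → ℕ)) (hS : IsGNS S)
    (f : Fin d → ℕ) (hf : IsFrobenius S f) :
    AlmostSymmetric S ↔
      ∀ h : Fin d → ℕ, h ∉ S → h ∉ PF S \ {f} → ∃ s ∈ S, h + s = f := by
  classical
  obtain ⟨h0S, haddS, hfin⟩ := hS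
  set φ : (Fin d → ℕ) → (Fin d → ℕ) := fun x i => f i - x i with hφ
  have hfC : f ∉ S := by
    have : f ∈ ({f} : Set (Fin d → ℕ)) := rfl
    rw [← hf] at this
    exact this.1
  -- every gap is ≤ f
  have hle : ∀ h : Fin d → ℕ, h ∉ S → h ≤ f := by
    intro h hh
    have hsub : {x ∈ Sᶜ | h ≤ x}.Finite := hfin.subset (fun x hx => hx.1)
    obtain ⟨m, hm, hmax⟩ : ∃ m ∈ {x ∈ Sᶜ | h ≤ x}, ∀ y ∈ {x ∈ Sᶜ | h ≤ x}, id m ≤ id y → id m = id y := by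
      obtain ⟨m, hm⟩ := hsub.exists_maximal ⟨h, hh, le_rfl⟩
      exact ⟨m, hm.1, fun y hy hmy => le_antisymm hmy (hm.2 hy hmy)⟩
    have hmF : m ∈ Maximals (· ≤ ·) Sᶜ := by
      refine ⟨hm.1, fun y hy hmy => ?_⟩
      exact hmax y ⟨hy, hm.2.trans hmy⟩ hmy
    rw [hf] at hmF
    exact hm.2.trans_eq hmF
  have hφadd : ∀ h : Fin d → ℕ, h ≤ f → h + φ h = f := by
    intro h hh; funext i; exact Nat.add_sub_cancel' (hh i)
  have hφφ : ∀ h : Fin d → ℕ, h ≤ f → φ (φ h) = h := by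
    intro h hh; funext i
    have h2 : h i ≤ f i := hh i
    simp only [hφ]
    omega
  have hφle : ∀ h : Fin d → ℕ, φ h ≤ f := fun h i => Nat.sub_le _ _
  -- f ∈ PF S
  have hfPF : f ∈ PF S := by
    refine ⟨hfC, fun s hs hs0 => ?_⟩
    by_contra hfs
    have h1 : f + s ≤ f := hle _ hfs
    have h2 : f ≤ f + s := fun i => Nat.le_add_right _ _
    have h3 : f + s = f := le_antisymm h1 h2
    apply hs0
    funext i
    have := congrFun h3 i
    simpa using this
  -- key equivalence
  have hkey : ∀ h : Fin d → ℕ, h ∉ S → ((∃ s ∈ S, h + s = f) ↔ φ h ∈ S) := by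
    intro h hh
    have hhf := hle h hh
    constructor
    · rintro ⟨s, hsS, hsf⟩
      have : s = φ h := by
        funext i
        have h1 : h i + s i = f i := congrFun hsf i
        simp only [hφ]
        omega
      rwa [this] at hsS
    · intro hs
      exact ⟨φ h, hs, hφadd h hhf⟩
  -- sets
  set B : Set (Fin d → ℕ) := Set.Iic f with hB
  have hBF : B = ↑(Fintype.piFinset fun i => Finset.Iic (f i)) := by
    ext x
    simp [hB, Fintype.mem_piFinset, Set.mem_Iic, Pi.le_def]
  have hBfin : B.Finite := by rw [hBF]; exact Set.finite_coe_iff.mp inferInstance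
  have hBcard : B.ncard = ∏ i, (f i + 1) := by
    rw [hBF, Set.ncard_coe_finset, Fintype.card_piFinset]
    simp [Nat.card_Iic]
  set L : Set (Fin d → ℕ) := S ∩ B with hL
  have hHB : Sᶜ ⊆ B := fun h hh => hle h hh
  have hBL : B \ Sᶜ = L := by
    ext x; simp only [Set.mem_diff, Set.mem_compl_iff, not_not, hL, Set.mem_inter_iff]
    tauto
  have hcard1 : L.ncard + (Sᶜ).ncard = B.ncard := by
    rw [← hBL]; exact Set.ncard_diff_add_ncard_of_subset hHB hBfin
  set H1 : Set (Fin d → ℕ) := {h ∈ Sᶜ | φ h ∈ S} with hH1def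
  have hH1 : H1 = φ '' L := by
    ext h
    constructor
    · rintro ⟨hhC, hhφ⟩
      exact ⟨φ h, ⟨hhφ, hφle h⟩, hφφ h (hle h hhC)⟩
    · rintro ⟨x, ⟨hxS, hxB⟩, rfl⟩
      refine ⟨?_, by rwa [hφφ x hxB]⟩
      intro hmem
      exact hfC (hφadd x hxB ▸ haddS x (φ x) hxS hmem)
  have hinj : Set.InjOn φ L := by
    intro x hx y hy hxy
    rw [← hφφ x hx.2, ← hφφ y hy.2, hxy]
  have hcard2 : H1.ncard = L.ncard := by
    rw [hH1]; exact Set.ncard_image_of_injOn hinj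
  have hH1fin : H1.Finite := hfin.subset (fun x hx => hx.1)
  set H2 : Set (Fin d → ℕ) := Sᶜ \ H1 with hH2def
  have hH2fin : H2.Finite := hfin.subset (fun x hx => hx.1)
  have hcard3 : H2.ncard + H1.ncard = (Sᶜ).ncard :=
    Set.ncard_diff_add_ncard_of_subset (fun x hx => hx.1) hfin
  -- PF S \ {f} ⊆ H2
  have hPFf : PF S \ {f} ⊆ H2 := by
    rintro h ⟨⟨hhS, hhPF⟩, hne⟩
    refine ⟨hhS, ?_⟩
    rintro ⟨-, hφh⟩
    have hhf := hle h hhS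
    have hφ0 : φ h ≠ 0 := by
      intro h0
      apply hne
      have : h = f := by
        funext i
        have h1 : (φ h) i = 0 := congrFun h0 i
        have h2 : h i ≤ f i := hhf i
        simp only [hφ] at h1
        omega
      simp [this]
    exact hfC (hφadd h hhf ▸ hhPF (φ h) hφh hφ0)
  have hPFfin : (PF S).Finite := hfin.subset (fun x hx => hx.1)
  have hPFcard : (PF S \ {f}).ncard + 1 = typ S := by
    have h1 : (PF S \ {f}).ncard + ({f} : Set (Fin d → ℕ)).ncard = (PF S).ncard :=
      Set.ncard_diff_add_ncard_of_subset (Set.singleton_subset_iff.2 hfPF) hPFfin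
    simpa [typ] using h1
  have hPFle : (PF S \ {f}).ncard ≤ H2.ncard :=
    Set.ncard_le_ncard hPFf hH2fin
  constructor
  · rintro ⟨h, hhS, heq⟩
    have hhf := hle h hhS
    have hprod : (∏ i, (h i + 1)) ≤ ∏ i, (f i + 1) :=
      Finset.prod_le_prod' (fun i _ => by have h2 : h i ≤ f i := hhf i; omega)
    -- deduce PF S \ {f} = H2
    have hg : genus S = (Sᶜ).ncard := rfl
    have ht : typ S = (PF S).ncard := rfl
    have hcards : H2.ncard ≤ (PF S \ {f}).ncard := by
      omega
    have hEQ : PF S \ {f} = H2 := Set.eq_of_subset_of_ncard_le hPFf hcards hH2fin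
    intro x hxS hxPF
    rw [hEQ] at hxPF
    have hx1 : x ∈ H1 := by
      by_contra hx1
      exact hxPF ⟨hxS, hx1⟩
    exact (hkey x hxS).2 hx1.2
  · intro hR
    have hsub : H2 ⊆ PF S \ {f} := by
      rintro h ⟨hhS, hh1⟩
      by_contra hPF
      have := (hkey h hhS).1 (hR h hhS hPF)
      exact hh1 ⟨hhS, this⟩
    have hEQ : H2 = PF S \ {f} :=
      Set.eq_of_subset_of_ncard_le hsub hPFle (hPFfin.subset Set.diff_subset)
    refine ⟨f, hfC, ?_⟩
    have h2 : H2.ncard = (PF S \ {f}).ncard := by rw [hEQ]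
    have hg : genus S = (Sᶜ).ncard := rfl
    have ht : typ S = (PF S).ncard := rfl
    omega
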